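/- Define $g_1(s,t) = \frac{1}{786432}\big(51252 s^3 t^2 - 42648 s^3 t + 10530 s^3 + 24544 s^2 t^2 - 11950 s^2 t + 1927 s^2 + 43062 s t - 22600 s + 32343\big)$ and $g_2(s,t) = \frac{1}{786432}\big(180 s^3 t^2 - 1368 s^3 t + 7650 s^3 + 27248 s^2 t^2 - 43082 s^2 t - 2185 s^2 - 47742 s t + 33064 s + 32383\big)$. Then $\frac{\partial}{\partial s}(g_1(s,t)+g_2(s,t)) > 0$ for all $s,t \in [0,1]$. -/

import Mathlib

/-- The pattern density `g₁(s,t)` of `1234` from Section 7. -/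
noncomputable def g₁ (s t : ℝ) : ℝ :=
  (1 / 786432) * (51252 * s ^ 3 * t ^ 2 - 42648 * s ^ 3 * t + 10530 * s ^ 3
    + 24544 * s ^ 2 * t ^ 2 - 11950 * s ^ 2 * t + 1927 * s ^ 2
    + 43062 * s * t - 22600 * s + 32343)

/-- The pattern density `g₂(s,t)` of `2143` from Section 7. -/
noncomputable def g₂ (s t : ℝ) : ℝ :=
  (1 / 786432) * (180 * s ^ 3 * t ^ 2 - 1368 * s ^ 3 * t + 7650 * s ^ 3
    + 27248 * s ^ 2 * t ^ 2 - 43082 * s ^ 2 * t - 2185 * s ^ 2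
    - 47742 * s * t + 33064 * s + 32383)

/-- Positivity of the auxiliary quartic `Q(t) = 3·A(t)·C(t) − B(t)²` on `[0,1]`. -/
lemma Q_aux_pos (t : ℝ) (h0 : 0 ≤ t) (h1 : t ≤ 1) :
    0 < -2682411264*t^4 + 4978329408*t^3 - 769258368*t^2 - 1665393984*t + 570639996 := by
  rcases le_or_gt t (2/5) with h | h
  · nlinarith [mul_nonneg h0 (sub_nonneg.2 h), sq_nonneg (t - 1/5), sq_nonneg t,
      mul_nonneg (mul_nonneg h0 h0) (sub_nonneg.2 h),
      mul_nonneg h0 (mul_nonneg (sub_nonneg.2 h) (sub_nonneg.2 h))]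
  rcases le_or_gt t (3/5) with h' | h'
  · have h : (2:ℝ)/5 ≤ t := h.le
    nlinarith [mul_nonneg (sub_nonneg.2 h) (sub_nonneg.2 h'), sq_nonneg (t - 1/2),
      sq_nonneg (t - 127/250),
      mul_nonneg (mul_nonneg (sub_nonneg.2 h) (sub_nonneg.2 h)) (sub_nonneg.2 h'),
      mul_nonneg (sub_nonneg.2 h) (mul_nonneg (sub_nonneg.2 h') (sub_nonneg.2 h'))]
  · have h' : (3:ℝ)/5 ≤ t := h'.le
    nlinarith [mul_nonneg (sub_nonneg.2 h') (sub_nonneg.2 h1), sq_nonneg (t - 4/5),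
      mul_nonneg (mul_nonneg (sub_nonneg.2 h') (sub_nonneg.2 h')) (sub_nonneg.2 h1),
      mul_nonneg (sub_nonneg.2 h') (mul_nonneg (sub_nonneg.2 h1) (sub_nonneg.2 h1))]

/-- `∂/∂s (g₁(s,t) + g₂(s,t)) > 0` for all `s, t ∈ [0,1]`. -/
theorem deriv_g1_add_g2_pos :
    ∀ s ∈ Set.Icc (0 : ℝ) 1, ∀ t ∈ Set.Icc (0 : ℝ) 1,
      0 < deriv (fun s => g₁ s t + g₂ s t) s := by
  intro s hs t ht
  obtain ⟨hs0, hs1⟩ := hs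
  obtain ⟨ht0, ht1⟩ := ht
  have key : (fun s => g₁ s t + g₂ s t)
      = fun x => (1/786432) * ((51432*t^2 - 44016*t + 18180)*x^3
        + (51792*t^2 - 55032*t - 258)*x^2 + (-4680*t + 10464)*x + 64726) := by
    funext x; simp only [g₁, g₂]; ring
  have h : HasDerivAt (fun x : ℝ => (1/786432) * ((51432*t^2 - 44016*t + 18180)*x^3
        + (51792*t^2 - 55032*t - 258)*x^2 + (-4680*t + 10464)*x + 64726))
      ((1/786432) * ((51432*t^2 - 44016*t + 18180)*(3*s^2)
        + (51792*t^2 - 55032*t - 258)*(2*s) + (-4680*t + 10464))) s := by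
    have h3 : HasDerivAt (fun x : ℝ => x^3) (3*s^2) s := by simpa using hasDerivAt_pow 3 s
    have h2 : HasDerivAt (fun x : ℝ => x^2) (2*s) s := by simpa using hasDerivAt_pow 2 s
    have h1 : HasDerivAt (fun x : ℝ => x) 1 s := hasDerivAt_id s
    have H := ((((h3.const_mul ((51432:ℝ)*t^2 - 44016*t + 18180)).add
      (h2.const_mul ((51792:ℝ)*t^2 - 55032*t - 258))).add
      ((h1.const_mul ((-4680:ℝ)*t + 10464)).add
        (hasDerivAt_const s (64726:ℝ)))).const_mul ((1:ℝ)/786432))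
    convert H using 1
    · rfl
    · rfl
    · funext x; simp only [Pi.add_apply]; ring
    · ring
  rw [key, h.deriv]
  have hA : 0 < 51432*t^2 - 44016*t + 18180 := by
    nlinarith [sq_nonneg (102864*t - 44016)]
  have hQ := Q_aux_pos t ht0 ht1
  have hP : 0 < (51432*t^2 - 44016*t + 18180)*(3*s^2)
        + (51792*t^2 - 55032*t - 258)*(2*s) + (-4680*t + 10464) := by
    have hsq := sq_nonneg (3*(51432*t^2 - 44016*t + 18180)*s + (51792*t^2 - 55032*t - 258))
    nlinarith [hsq, hQ, hA]
  positivity
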